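/- (Log-convexity of the OU semigroup) Let γ be the standard Gaussian measure on ℝ^d and g ≥ 0 a Borel function in L¹(γ). For t > 0 define T_t g by Mehler's formula. Then for all x₀, x₁ ∈ ℝ^d and s ∈ [0,1], T_t g((1−s)x₀ + s x₁) ≤ exp( s(1−s)|x₁−x₀|²/(2t) ) · (T_t g(x₀))^{1−s} (T_t g(x₁))^{s}. -/

import Mathlib

open MeasureTheory Real ProbabilityTheory ENNReal

noncomputable def stdGaussian (d : ℕ) : Measure (EuclideanSpace ℝ (Fin d)) :=
  (Measure.pi fun _ : Fin d => gaussianReal 0 1).map (MeasurableEquiv.toLp 2 (Fin d → ℝ))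

noncomputable def OUl (d : ℕ) (t : ℝ) (g : EuclideanSpace ℝ (Fin d) → ℝ)
    (x : EuclideanSpace ℝ (Fin d)) : ℝ≥0∞ :=
  ∫⁻ y, ENNReal.ofReal (g (Real.exp (-t) • x + Real.sqrt (1 - Real.exp (-2 * t)) • y))
    ∂(stdGaussian d)

/-! ### Auxiliary lemmas -/

theorem my_lintegral_pi {n : ℕ} {E : Fin n → Type*}
    [∀ i, MeasurableSpace (E i)] (μ : ∀ i, Measure (E i)) [∀ i, SigmaFinite (μ i)]
    {f : (i : Fin n) → E i → ℝ≥0∞} (hf : ∀ i, Measurable (f i)) :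
    ∫⁻ x : ∀ i, E i, ∏ i, f i (x i) ∂Measure.pi μ = ∏ i, ∫⁻ x, f i x ∂μ i := by
  induction n with
  | zero => simp [Measure.pi_of_empty]
  | succ n ih =>
    have hmp := measurePreserving_piFinSuccAbove μ 0
    set g2 : (∀ j : Fin n, E ((0:Fin (n+1)).succAbove j)) → ℝ≥0∞ :=
      fun w => ∏ j, f ((0:Fin (n+1)).succAbove j) (w j) with hg2
    have hg2m : Measurable g2 :=
      Finset.measurable_prod _ fun j _ => (hf _).comp (measurable_pi_apply j)
    have hG : Measurable fun z : E 0 × (∀ j : Fin n, E ((0:Fin (n+1)).succAbove j)) =>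
        f 0 z.1 * g2 z.2 :=
      ((hf 0).comp measurable_fst).mul (hg2m.comp measurable_snd)
    have key : ∫⁻ x : ∀ i, E i, ∏ i, f i (x i) ∂Measure.pi μ
        = ∫⁻ z, f 0 z.1 * g2 z.2
            ∂((μ 0).prod (Measure.pi fun j => μ ((0:Fin (n+1)).succAbove j))) := by
      rw [← hmp.lintegral_comp hG]
      congr 1
      funext x
      simp [hg2, MeasurableEquiv.piFinSuccAbove, Fin.prod_univ_succ, Fin.zero_succAbove,
        Fin.tail, Fin.consEquiv]
      rfl
    have h2 : ∫⁻ y, g2 y ∂Measure.pi (fun j => μ ((0:Fin (n+1)).succAbove j))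
        = ∏ j, ∫⁻ x, f ((0:Fin (n+1)).succAbove j) x ∂μ ((0:Fin (n+1)).succAbove j) :=
      ih _ (fun j => hf _)
    rw [key, lintegral_prod_mul (hf 0).aemeasurable hg2m.aemeasurable, h2,
      Fin.prod_univ_succ]
    exact congrArg _ (Finset.prod_congr rfl fun j _ => by simp [Fin.zero_succAbove]; rfl)

lemma gaussianPDFReal_shift (v y : ℝ) :
    gaussianPDFReal v 1 y = gaussianPDFReal 0 1 y * Real.exp (v * y - v ^ 2 / 2) := by
  simp only [gaussianPDFReal, NNReal.coe_one, mul_one, sub_zero]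
  rw [mul_assoc, ← Real.exp_add]
  congr 1
  ring

lemma gaussianReal_shift (v : ℝ) :
    gaussianReal v 1 = (gaussianReal 0 1).withDensity
      (fun y => ENNReal.ofReal (Real.exp (v * y - v ^ 2 / 2))) := by
  have hw : Measurable fun y : ℝ => ENNReal.ofReal (Real.exp (v * y - v ^ 2 / 2)) := by
    fun_prop
  rw [gaussianReal_of_var_ne_zero _ one_ne_zero, gaussianReal_of_var_ne_zero _ one_ne_zero,
    ← withDensity_mul _ (measurable_gaussianPDF _ _) hw]
  congr 1
  funext y
  simp only [Pi.mul_apply, gaussianPDF_def]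
  rw [gaussianPDFReal_shift, ENNReal.ofReal_mul (gaussianPDFReal_nonneg _ _ _)]

variable {d : ℕ}

lemma w_meas (v : EuclideanSpace ℝ (Fin d)) :
    Measurable fun y : EuclideanSpace ℝ (Fin d) =>
      ∏ i, ENNReal.ofReal (Real.exp (v i * y i - v i ^ 2 / 2)) :=
  Finset.measurable_prod _ fun i _ => by
    have : Measurable fun y : EuclideanSpace ℝ (Fin d) => y i :=
      (measurable_pi_apply i).comp (WithLp.measurable_ofLp 2 _)
    fun_prop

/-- translated pi-gaussian as density against stdGaussian -/
lemma pi_gauss_shift (v : EuclideanSpace ℝ (Fin d)) :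
    Measure.pi (fun i : Fin d => gaussianReal (v i) 1)
      = (Measure.pi fun _ : Fin d => gaussianReal 0 1).withDensity
          (fun y : Fin d → ℝ => ∏ i, ENNReal.ofReal (Real.exp (v i * y i - v i ^ 2 / 2))) := by
  refine Measure.pi_eq fun s hs => ?_
  rw [withDensity_apply _ (MeasurableSet.univ_pi hs)]
  have : ∀ y : Fin d → ℝ,
      (Set.univ.pi s).indicator
        (fun y => ∏ i, ENNReal.ofReal (Real.exp (v i * y i - v i ^ 2 / 2))) y
      = ∏ i, (s i).indicator
          (fun x => ENNReal.ofReal (Real.exp (v i * x - v i ^ 2 / 2))) (y i) := by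
    intro y
    by_cases hy : y ∈ Set.univ.pi s
    · rw [Set.indicator_of_mem hy]
      exact Finset.prod_congr rfl fun i _ =>
        (Set.indicator_of_mem (hy i (Set.mem_univ i))
          (fun x => ENNReal.ofReal (Real.exp (v i * x - v i ^ 2 / 2)))).symm
    · rw [Set.indicator_of_notMem hy]
      rw [Set.mem_univ_pi] at hy
      push_neg at hy
      obtain ⟨i, hi⟩ := hy
      exact (Finset.prod_eq_zero (Finset.mem_univ i)
        (by rw [Set.indicator_of_notMem hi])).symm
  rw [← lintegral_indicator (MeasurableSet.univ_pi hs)]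
  simp only [this]
  rw [my_lintegral_pi (fun _ : Fin d => gaussianReal 0 1)
    (fun i => Measurable.indicator (by fun_prop) (hs i))]
  exact Finset.prod_congr rfl fun i _ => by
    rw [lintegral_indicator (hs i), gaussianReal_shift (v i),
      withDensity_apply _ (hs i)]

lemma stdGaussian_map_add (v : EuclideanSpace ℝ (Fin d)) :
    Measure.map (fun y : Fin d → ℝ => y + v.ofLp) (Measure.pi fun _ : Fin d => gaussianReal 0 1)
      = Measure.pi (fun i : Fin d => gaussianReal (v i) 1) := by
  refine (Measure.pi_eq fun s hs => ?_).symm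
  have hms : MeasurableSet (Set.univ.pi s : Set (Fin d → ℝ)) :=
    MeasurableSet.univ_pi hs
  have hmap := Measure.map_apply (μ := Measure.pi fun _ : Fin d => gaussianReal 0 1)
    (f := fun y : Fin d → ℝ => y + v.ofLp) (measurable_add_const v.ofLp) hms
  refine hmap.trans ?_
  have hpre : (fun y : Fin d → ℝ => y + v.ofLp) ⁻¹' (Set.univ.pi s)
      = Set.univ.pi fun i => (fun a : ℝ => a + v i) ⁻¹' (s i) := by
    ext y
    simp only [Set.mem_preimage, Set.mem_univ_pi]
    exact forall_congr' fun i => by rw [Pi.add_apply]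
  rw [hpre]
  refine (Measure.pi_pi _ _).trans (Finset.prod_congr rfl fun i _ => ?_)
  rw [← Measure.map_apply (measurable_add_const (v i)) (hs i),
    gaussianReal_map_add_const (v i), zero_add]

lemma lintegral_shift (v : EuclideanSpace ℝ (Fin d)) {f : EuclideanSpace ℝ (Fin d) → ℝ≥0∞}
    (hf : Measurable f) :
    ∫⁻ y, f (y + v) ∂stdGaussian d
      = ∫⁻ y, (∏ i, ENNReal.ofReal (Real.exp (v i * y i - v i ^ 2 / 2))) * f y
          ∂stdGaussian d := by
  have hfm : Measurable (f ∘ WithLp.toLp 2) := hf.comp (WithLp.measurable_toLp 2 _)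
  have hwm : Measurable fun y : Fin d → ℝ => ∏ i, ENNReal.ofReal (Real.exp (v i * y i - v i ^ 2 / 2)) :=
    Finset.measurable_prod _ fun i _ => by
      have : Measurable fun y : Fin d → ℝ => y i := measurable_pi_apply i
      fun_prop
  rw [_root_.stdGaussian, lintegral_map_equiv, lintegral_map_equiv]
  have hc : ∀ z : Fin d → ℝ, f (MeasurableEquiv.toLp 2 (Fin d → ℝ) z + v) = (f ∘ WithLp.toLp 2) (z + v.ofLp) := by
    intro z; simp [MeasurableEquiv.toLp]; rfl
  simp only [hc]
  rw [← lintegral_map hfm (measurable_add_const v.ofLp), stdGaussian_map_add, pi_gauss_shift,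
    lintegral_withDensity_eq_lintegral_mul _ hwm hfm]
  rfl

theorem OU_log_convexity (d : ℕ) (g : EuclideanSpace ℝ (Fin d) → ℝ)
    (hg : Measurable g) (hg0 : ∀ x, 0 ≤ g x) (hgint : Integrable g (stdGaussian d))
    (t : ℝ) (ht : 0 < t) (x₀ x₁ : EuclideanSpace ℝ (Fin d)) (s : ℝ) (hs : s ∈ Set.Icc (0:ℝ) 1) :
    OUl d t g ((1 - s) • x₀ + s • x₁)
      ≤ ENNReal.ofReal (Real.exp (s * (1 - s) * ‖x₁ - x₀‖ ^ 2 / (2 * t)))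
        * (OUl d t g x₀) ^ (1 - s) * (OUl d t g x₁) ^ s := by
  obtain ⟨hs0, hs1⟩ := hs
  have hs1' : 0 ≤ 1 - s := by linarith
  set e := Real.exp (-t) with he
  set σ := Real.sqrt (1 - Real.exp (-2 * t)) with hσdef
  have hexp2 : Real.exp (-2 * t) < 1 := by
    rw [Real.exp_lt_one_iff]; linarith
  have hσ2pos : 0 < 1 - Real.exp (-2 * t) := by linarith
  have hσpos : 0 < σ := Real.sqrt_pos.mpr hσ2pos
  have hσ : σ ≠ 0 := ne_of_gt hσpos
  have hσsq : σ ^ 2 = 1 - Real.exp (-2 * t) := Real.sq_sqrt hσ2pos.le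
  set a : EuclideanSpace ℝ (Fin d) := (e / σ) • (x₁ - x₀) with hadef
  have ha : σ • a = e • (x₁ - x₀) := by
    rw [hadef, smul_smul, mul_comm, div_mul_cancel₀ e hσ]
  set H : EuclideanSpace ℝ (Fin d) → ℝ≥0∞ :=
    fun y => ENNReal.ofReal (g (e • x₀ + σ • y)) with hHdef
  have hHm : Measurable H := by
    refine ENNReal.measurable_ofReal.comp (hg.comp ?_)
    exact (continuous_const.add (continuous_id.const_smul σ)).measurable
  -- the two affine identities
  have key1 : ∀ y : EuclideanSpace ℝ (Fin d),
      e • ((1 - s) • x₀ + s • x₁) + σ • y = e • x₀ + σ • (y + s • a) := by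
    intro y
    rw [show σ • (y + s • a) = σ • y + (s * e) • (x₁ - x₀) from by
      rw [smul_add, smul_comm, ha, smul_smul]]
    module
  have key2 : ∀ y : EuclideanSpace ℝ (Fin d),
      e • x₁ + σ • y = e • x₀ + σ • (y + a) := by
    intro y
    rw [show σ • (y + a) = σ • y + e • (x₁ - x₀) from by rw [smul_add, ha]]
    module
  -- rewrite the three OU integrals
  have hOUs : OUl d t g ((1 - s) • x₀ + s • x₁) = ∫⁻ y, H (y + s • a) ∂stdGaussian d := by
    simp only [OUl, ← he, ← hσdef, hHdef]
    exact lintegral_congr fun y => by rw [key1 y]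
  have hOU0 : OUl d t g x₀ = ∫⁻ y, H y ∂stdGaussian d := rfl
  have hOU1 : OUl d t g x₁ = ∫⁻ y, H (y + a) ∂stdGaussian d := by
    simp only [OUl, ← he, ← hσdef, hHdef]
    exact lintegral_congr fun y => by rw [key2 y]
  -- the density weights
  set W : EuclideanSpace ℝ (Fin d) → EuclideanSpace ℝ (Fin d) → ℝ≥0∞ :=
    fun v y => ∏ i, ENNReal.ofReal (Real.exp (v i * y i - v i ^ 2 / 2)) with hWdef
  have hW : ∀ v y : EuclideanSpace ℝ (Fin d),
      W v y = ENNReal.ofReal (Real.exp (∑ i, (v i * y i - v i ^ 2 / 2))) := by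
    intro v y
    rw [hWdef, Real.exp_sum, ENNReal.ofReal_prod_of_nonneg fun i _ => (Real.exp_pos _).le]
  set B : ℝ := ∑ i, (a i) ^ 2 with hBdef
  have hBnn : 0 ≤ B := Finset.sum_nonneg fun i _ => sq_nonneg _
  set c : ℝ := s * (1 - s) * B / 2 with hcdef
  -- pointwise identity
  have hpt : ∀ y, W (s • a) y * H y
      = ENNReal.ofReal (Real.exp c) * (H y ^ (1 - s) * (W a y * H y) ^ s) := by
    intro y
    have hsum : ∑ i, ((s • a : EuclideanSpace ℝ (Fin d)) i * y i
        - ((s • a : EuclideanSpace ℝ (Fin d)) i) ^ 2 / 2)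
        = c + s * ∑ i, (a i * y i - a i ^ 2 / 2) := by
      simp only [PiLp.smul_apply, smul_eq_mul, hcdef, hBdef, Finset.mul_sum,
        Finset.sum_div, ← Finset.sum_add_distrib]
      exact Finset.sum_congr rfl fun i _ => by ring
    have hWs : W (s • a) y
        = ENNReal.ofReal (Real.exp c) * (W a y) ^ s := by
      rw [hW, hW, hsum, Real.exp_add, ENNReal.ofReal_mul (Real.exp_pos _).le,
        mul_comm s, Real.exp_mul, ENNReal.ofReal_rpow_of_pos (Real.exp_pos _)]
    rw [hWs, ENNReal.mul_rpow_of_nonneg _ _ hs0,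
      show H y ^ (1 - s) * (W a y ^ s * H y ^ s) = W a y ^ s * (H y ^ (1 - s) * H y ^ s) from
        by ring,
      ← ENNReal.rpow_add_of_nonneg (1 - s) s hs1' hs0, sub_add_cancel, ENNReal.rpow_one]
    ring
  -- Hölder
  have hWam : Measurable (W a) := w_meas a
  calc OUl d t g ((1 - s) • x₀ + s • x₁)
      = ∫⁻ y, W (s • a) y * H y ∂stdGaussian d := by
        rw [hOUs, lintegral_shift _ hHm]
    _ = ENNReal.ofReal (Real.exp c)
        * ∫⁻ y, H y ^ (1 - s) * (W a y * H y) ^ s ∂stdGaussian d := by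
        rw [← lintegral_const_mul' _ _ ENNReal.ofReal_ne_top]
        exact lintegral_congr fun y => hpt y
    _ ≤ ENNReal.ofReal (Real.exp c)
        * ((∫⁻ y, H y ∂stdGaussian d) ^ (1 - s)
            * (∫⁻ y, W a y * H y ∂stdGaussian d) ^ s) := by
        exact mul_le_mul_right (ENNReal.lintegral_mul_norm_pow_le hHm.aemeasurable
          (hWam.mul hHm).aemeasurable hs1' hs0 (by ring)) _
    _ = ENNReal.ofReal (Real.exp c) * (OUl d t g x₀) ^ (1 - s) * (OUl d t g x₁) ^ s := by
        rw [hOU0, hOU1, lintegral_shift _ hHm, mul_assoc]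
    _ ≤ ENNReal.ofReal (Real.exp (s * (1 - s) * ‖x₁ - x₀‖ ^ 2 / (2 * t)))
        * (OUl d t g x₀) ^ (1 - s) * (OUl d t g x₁) ^ s := by
        gcongr
        -- compare the constants
        have hB : B = (e / σ) ^ 2 * ‖x₁ - x₀‖ ^ 2 := by
          rw [hBdef, EuclideanSpace.norm_eq,
            Real.sq_sqrt (Finset.sum_nonneg fun i _ => sq_nonneg _), Finset.mul_sum]
          refine Finset.sum_congr rfl fun i _ => ?_
          rw [hadef, PiLp.smul_apply, smul_eq_mul, mul_pow, Real.norm_eq_abs, sq_abs]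
        have hesq : e ^ 2 = Real.exp (-2 * t) := by
          rw [he, ← Real.exp_nat_mul]
          norm_num
        have hratio : (e / σ) ^ 2 ≤ 1 / (2 * t) := by
          rw [div_pow, hesq, hσsq, div_le_div_iff₀ hσ2pos (by linarith)]
          have h2t := Real.add_one_le_exp (2 * t)
          have hprod : Real.exp (-2 * t) * Real.exp (2 * t) = 1 := by
            rw [← Real.exp_add]; norm_num
          nlinarith [Real.exp_pos (-2 * t)]
        have hnn : 0 ≤ s * (1 - s) := mul_nonneg hs0 hs1'
        have hΔ : (0:ℝ) ≤ ‖x₁ - x₀‖ ^ 2 := sq_nonneg _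
        have h1 : (e / σ) ^ 2 * ‖x₁ - x₀‖ ^ 2 ≤ 1 / (2 * t) * ‖x₁ - x₀‖ ^ 2 :=
          mul_le_mul_of_nonneg_right hratio hΔ
        have h2 : s * (1 - s) * ((e / σ) ^ 2 * ‖x₁ - x₀‖ ^ 2)
            ≤ s * (1 - s) * (1 / (2 * t) * ‖x₁ - x₀‖ ^ 2) :=
          mul_le_mul_of_nonneg_left h1 hnn
        calc c = s * (1 - s) * ((e / σ) ^ 2 * ‖x₁ - x₀‖ ^ 2) / 2 := by rw [hcdef, hB]
          _ ≤ s * (1 - s) * (1 / (2 * t) * ‖x₁ - x₀‖ ^ 2) / 2 := by linarith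
          _ = (s * (1 - s) * ‖x₁ - x₀‖ ^ 2) / (4 * t) := by ring
          _ ≤ (s * (1 - s) * ‖x₁ - x₀‖ ^ 2) / (2 * t) := by
              apply div_le_div_of_nonneg_left (mul_nonneg hnn hΔ) (by linarith) (by linarith)
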